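/- arXiv:1204.5203 — 2 statements merged into one kernel-verified Lean document; each statement's English description precedes it below -/
import Mathlib

section
/- Let n ≥ 3 and let f : 𝔽₂ⁿ → 𝔽₂ be a nested canalizing function whose layered form has layer number r = n−1 with layer sizes k₁ = ⋯ = k_{n−2} = 1 and k_{n−1} = 2. Then the average sensitivity of f equals s^f = 4/3 − (3 + (−1)ⁿ)/(3 · 2ⁿ). -/
/-- `f` is nested canalizing in the variable order `σ(0), σ(1), …, σ(n-1)`
with canalizing input values `a` and canalized output values `b`:
`f x = b k` whenever `x (σ j) = a j + 1` for all `j < k` and `x (σ k) = a k`,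
and `f x = b (last) + 1` whenever `x (σ j) = a j + 1` for all `j`. -/
def IsNCF {n : ℕ} (f : (Fin n → ZMod 2) → ZMod 2) (σ : Equiv.Perm (Fin n))
    (a b : Fin n → ZMod 2) : Prop :=
  (∀ (k : Fin n) (x : Fin n → ZMod 2),
      (∀ j : Fin n, j < k → x (σ j) = a j + 1) → x (σ k) = a k → f x = b k) ∧
  (∀ k : Fin n, (∀ j : Fin n, j ≤ k) →
      ∀ x : Fin n → ZMod 2, (∀ j : Fin n, x (σ j) = a j + 1) → f x = b k + 1)

/-- The nested expression `M i * (M (i+1) * ( … * (M (i+t-1) + 1) … ) + 1)`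
with `t` factors, i.e. `nestVal M t i = Mᵢ(M_{i+1}(⋯(M_{i+t-1} ⊕ 1)⋯) ⊕ 1)`. -/
def nestVal (M : ℕ → ZMod 2) : ℕ → ℕ → ZMod 2
  | 0, _ => 0
  | 1, i => M i
  | (t + 2), i => M i * (nestVal M (t + 1) (i + 1) + 1)

/-- The extended monomial of the `i`-th layer, given the layer assignment `L`
and the complemented inputs `a`:  `Mᵢ(x) = ∏_{L j = i} (x j ⊕ a j)`. -/
def layerMon {n r : ℕ} (L : Fin n → Fin r) (a : Fin n → ZMod 2) (i : ℕ)
    (x : Fin n → ZMod 2) : ZMod 2 :=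
  ∏ j ∈ Finset.univ.filter (fun j : Fin n => (L j : ℕ) = i), (x j + a j)

/-- `kᵢ`, the number of variables in the `i`-th layer. -/
def layerSize {n r : ℕ} (L : Fin n → Fin r) (i : ℕ) : ℕ :=
  (Finset.univ.filter (fun j : Fin n => (L j : ℕ) = i)).card

/-- `K_l = k₀ + k₁ + ⋯ + k_{l-1}`, the number of variables in the first `l` layers. -/
def layerSum {n r : ℕ} (L : Fin n → Fin r) (l : ℕ) : ℕ :=
  ∑ i ∈ Finset.range l, layerSize L i

/-- `f` is given in the layered form
`f = M₁(M₂(⋯(M_{r−1}(M_r ⊕ 1) ⊕ 1)⋯) ⊕ 1) ⊕ b`, where the `Mᵢ` are extended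
monomials in pairwise disjoint sets of variables comprising all `n` variables
(the variable set of `Mᵢ` being the `i`-th layer `{j | L j = i}`), every layer
is nonempty, and the last layer has at least two variables. -/
def IsLayeredForm {n r : ℕ} (f : (Fin n → ZMod 2) → ZMod 2)
    (L : Fin n → Fin r) (a : Fin n → ZMod 2) (b : ZMod 2) : Prop :=
  1 ≤ r ∧
  (∀ i : Fin r, 1 ≤ layerSize L (i : ℕ)) ∧
  2 ≤ layerSize L (r - 1) ∧
  ∀ x : Fin n → ZMod 2, f x = nestVal (fun i => layerMon L a i x) r 0 + b

/-- The activity `λᵢᶠ = 2⁻ⁿ ∑_x (f(x with xᵢ flipped) ⊕ f(x))`, the Boolean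
difference being regarded as the integer 0 or 1. -/
def activity {n : ℕ} (f : (Fin n → ZMod 2) → ZMod 2) (i : Fin n) : ℚ :=
  (1 / 2 ^ n) * ∑ x : Fin n → ZMod 2,
    ((f (Function.update x i (x i + 1)) + f x).val : ℚ)

/-- The average sensitivity `sᶠ = ∑ᵢ λᵢᶠ`. -/
def avgSens {n : ℕ} (f : (Fin n → ZMod 2) → ZMod 2) : ℚ :=
  ∑ i : Fin n, activity f i

-- ZMod 2 helpers
lemma zflip (a : ZMod 2) : ((a+1).val : ℚ) + (a.val : ℚ) = 1 := by
  have : (a+1).val + a.val = 1 := by revert a; decide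
  exact_mod_cast this

lemma sum_zmod (F : ZMod 2 → ℚ) : ∑ c, F c = F 0 + F 1 := by
  rw [show (Finset.univ : Finset (ZMod 2)) = {0, 1} by decide,
    Finset.sum_insert (by decide), Finset.sum_singleton]

lemma sum_cube0 (F : (Fin 0 → ZMod 2) → ℚ) : ∑ y, F y = F (fun i => i.elim0) := by
  rw [Fintype.sum_unique]; congr

lemma sum_cube {n : ℕ} (F : (Fin (n+1) → ZMod 2) → ℚ) :
    ∑ y, F y = ∑ c : ZMod 2, ∑ t : Fin n → ZMod 2, F (Fin.cons c t) := by
  rw [← Equiv.sum_comp (Fin.consEquiv (fun _ : Fin (n+1) => ZMod 2)) F,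
    Fintype.sum_prod_type]
  rfl

lemma card_cube (n : ℕ) : (Fintype.card (Fin n → ZMod 2) : ℚ) = 2 ^ n := by
  simp [Fintype.card_fun]


-- activity invariance under adding a constant
lemma activity_add_const {n : ℕ} (g : (Fin n → ZMod 2) → ZMod 2) (b : ZMod 2) (i : Fin n) :
    activity (fun x => g x + b) i = activity g i := by
  unfold activity
  congr 1
  apply Finset.sum_congr rfl
  intro x _
  congr 1
  have : ∀ u v : ZMod 2, (u + b) + (v + b) = u + v := by revert b; decide
  rw [this]

lemma avgSens_add_const {n : ℕ} (g : (Fin n → ZMod 2) → ZMod 2) (b : ZMod 2) :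
    avgSens (fun x => g x + b) = avgSens g := by
  unfold avgSens
  exact Finset.sum_congr rfl fun i _ => activity_add_const g b i

-- relabeling equivalence
def tEquiv {n : ℕ} (e : Equiv.Perm (Fin n)) (d : Fin n → ZMod 2) :
    (Fin n → ZMod 2) ≃ (Fin n → ZMod 2) where
  toFun x := fun i => x (e i) + d i
  invFun z := fun j => z (e.symm j) + d (e.symm j)
  left_inv x := by
    funext j
    have h2 : ∀ u v : ZMod 2, u + v + v = u := by decide
    show x (e (e.symm j)) + d (e.symm j) + d (e.symm j) = x j
    rw [Equiv.apply_symm_apply, h2]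
  right_inv z := by
    funext i
    have h2 : ∀ u v : ZMod 2, u + v + v = u := by decide
    show z (e.symm (e i)) + d (e.symm (e i)) + d i = z i
    rw [Equiv.symm_apply_apply, h2]

lemma tEquiv_update {n : ℕ} (e : Equiv.Perm (Fin n)) (d : Fin n → ZMod 2)
    (x : Fin n → ZMod 2) (i : Fin n) (v : ZMod 2) :
    tEquiv e d (Function.update x i v) =
      Function.update (tEquiv e d x) (e.symm i) (v + d (e.symm i)) := by
  funext j
  simp only [tEquiv, Equiv.coe_fn_mk, Function.update]
  by_cases hj : j = e.symm i
  · subst hj; simp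
  · have : ¬ (e j = i) := fun hc => hj (by simp [← hc])
    simp [hj, this]

lemma activity_relabel {n : ℕ} (g : (Fin n → ZMod 2) → ZMod 2)
    (e : Equiv.Perm (Fin n)) (d : Fin n → ZMod 2) (i : Fin n) :
    activity (fun x => g (tEquiv e d x)) i = activity g (e.symm i) := by
  unfold activity
  congr 1
  rw [← Equiv.sum_comp (tEquiv e d)
    (fun z => ((g (Function.update z (e.symm i) (z (e.symm i) + 1)) + g z).val : ℚ))]
  apply Finset.sum_congr rfl
  intro x _
  simp only []
  congr 2
  have hv : x i + 1 + d (e.symm i) = tEquiv e d x (e.symm i) + 1 := by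
    show x i + 1 + d (e.symm i) = x (e (e.symm i)) + d (e.symm i) + 1
    rw [Equiv.apply_symm_apply]
    ring
  rw [tEquiv_update, hv]

lemma avgSens_relabel {n : ℕ} (g : (Fin n → ZMod 2) → ZMod 2)
    (e : Equiv.Perm (Fin n)) (d : Fin n → ZMod 2) :
    avgSens (fun x => g (fun i => x (e i) + d i)) = avgSens g := by
  unfold avgSens
  rw [← Equiv.sum_comp e.symm (activity g)]
  apply Finset.sum_congr rfl
  intro i _
  exact activity_relabel g e d i

-- canonical chain function
def Hn : ℕ → ℕ → (ℕ → ZMod 2) → ZMod 2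
  | 0, i, y => y i * y (i+1)
  | (m+1), i, y => y i * (Hn m (i+1) y + 1)

def Hf (m : ℕ) (y : Fin (m+2) → ZMod 2) : ZMod 2 :=
  Hn m 0 (fun j => if h : j < m + 2 then y ⟨j, h⟩ else 0)

lemma Hn_congr : ∀ (m i : ℕ) (y z : ℕ → ZMod 2), (∀ j, y j = z j) → Hn m i y = Hn m i z := by
  intro m
  induction m with
  | zero => intro i y z h; unfold Hn; rw [h, h]
  | succ m ih => intro i y z h; unfold Hn; rw [h, ih (i+1) y z h]

lemma Hn_shift : ∀ (m i : ℕ) (y : ℕ → ZMod 2), Hn m (i+1) y = Hn m i (fun j => y (j+1)) := by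
  intro m
  induction m with
  | zero => intro i y; rfl
  | succ m ih => intro i y; unfold Hn; rw [ih]

lemma Hf_zero (y : Fin 2 → ZMod 2) : Hf 0 y = y 0 * y 1 := by
  unfold Hf Hn
  norm_num

lemma Hf_succ (m : ℕ) (y : Fin (m+3) → ZMod 2) :
    Hf (m+1) y = y 0 * (Hf m (Fin.tail y) + 1) := by
  have e1 : Hf (m+1) y = (if h : (0:ℕ) < m+3 then y ⟨0,h⟩ else 0) *
      (Hn m 1 (fun j => if h : j < m+3 then y ⟨j,h⟩ else 0) + 1) := rfl
  rw [e1]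
  congr 1
  rw [Hn_shift]
  congr 1
  apply Hn_congr
  intro j
  by_cases h : j < m + 2
  · have h2 : j + 1 < m + 3 := by omega
    simp only [h, h2, dif_pos]
    rfl
  · have h2 : ¬ (j + 1 < m + 3) := by omega
    simp only [h, h2, dif_neg, not_false_iff]

section Rec
variable {n : ℕ} (g : (Fin n → ZMod 2) → ZMod 2)

lemma act0 :
    activity (fun y : Fin (n+1) → ZMod 2 => y 0 * (g (Fin.tail y) + 1)) 0 =
      (1 / 2 ^ n) * ∑ t : Fin n → ZMod 2, ((g t + 1).val : ℚ) := by
  unfold activity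
  rw [sum_cube, sum_zmod]
  have h1 : ∀ c u : ZMod 2, (c+1)*(u+1) + c*(u+1) = u+1 := by decide
  simp only [Fin.cons_zero, Fin.update_cons_zero, Fin.tail_cons, h1]
  rw [pow_succ]
  ring
end Rec

section Rec2
variable {n : ℕ} (g : (Fin n → ZMod 2) → ZMod 2)

lemma act_succ (i : Fin n) :
    activity (fun y : Fin (n+1) → ZMod 2 => y 0 * (g (Fin.tail y) + 1)) i.succ =
      (1/2) * activity g i := by
  unfold activity
  rw [sum_cube, sum_zmod]
  have h1 : ∀ c u v : ZMod 2, (c*(u+1) + c*(v+1)).val = c.val * (u + v).val := by decide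
  have h2 : ∀ (c : ZMod 2) (t : Fin n → ZMod 2) (v : ZMod 2),
      Function.update (Fin.cons c t : Fin (n+1) → ZMod 2) i.succ v =
        Fin.cons c (Function.update t i v) := by
    intro c t v
    rw [← Fin.cons_update]
  simp only [Fin.cons_succ, h2, Fin.cons_zero, Fin.tail_cons]
  have h3 : ∀ c : ZMod 2, ∑ t : Fin n → ZMod 2,
      ((c * (g (Function.update t i (t i + 1)) + 1) + c * (g t + 1)).val : ℚ)
      = (c.val : ℚ) * ∑ t : Fin n → ZMod 2, ((g (Function.update t i (t i + 1)) + g t).val : ℚ) := by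
    intro c
    rw [Finset.mul_sum]
    refine Finset.sum_congr rfl fun t _ => ?_
    rw [h1]
    push_cast
    ring
  rw [h3, h3]
  simp only [ZMod.val_zero, ZMod.val_one]
  rw [pow_succ]
  push_cast
  ring

lemma count_rec :
    ∑ y : Fin (n+1) → ZMod 2, (((fun y : Fin (n+1) → ZMod 2 => y 0 * (g (Fin.tail y) + 1)) y).val : ℚ)
      = 2^n - ∑ t : Fin n → ZMod 2, ((g t).val : ℚ) := by
  rw [sum_cube, sum_zmod]
  simp only [Fin.cons_zero, Fin.tail_cons]
  have h0 : ∀ u : ZMod 2, ((0 : ZMod 2) * (u+1)).val = 0 := by decide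
  have h1' : ∀ u : ZMod 2, (((1 : ZMod 2) * (u+1)).val : ℚ) = 1 - (u.val : ℚ) := by
    intro u
    have := zflip u
    have e : (1 : ZMod 2) * (u+1) = u + 1 := one_mul _
    rw [e]
    linarith
  simp only [h0, h1']
  have hc : (Fintype.card (Fin n → ZMod 2) : ℚ) = 2 ^ n := by
    rw [Fintype.card_fun]
    simp [ZMod.card]
  rw [Finset.sum_sub_distrib]
  simp only [Finset.sum_const, Finset.card_univ, nsmul_eq_mul, mul_one, Nat.cast_zero,
    mul_zero, zero_add, CharP.cast_eq_zero]
  rw [hc]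
end Rec2

lemma sum_flip {n : ℕ} (g : (Fin n → ZMod 2) → ZMod 2) :
    ∑ t : Fin n → ZMod 2, ((g t + 1).val : ℚ) = 2^n - ∑ t : Fin n → ZMod 2, ((g t).val : ℚ) := by
  have hflip : ∀ t, ((g t + 1).val : ℚ) = 1 - ((g t).val : ℚ) := by
    intro t
    have := zflip (g t)
    linarith
  have hc : (Fintype.card (Fin n → ZMod 2) : ℚ) = 2 ^ n := by
    rw [Fintype.card_fun]
    simp [ZMod.card]
  rw [Finset.sum_congr rfl fun t _ => hflip t, Finset.sum_sub_distrib]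
  simp only [Finset.sum_const, Finset.card_univ, nsmul_eq_mul, mul_one]
  rw [hc]

lemma avg_rec {n : ℕ} (g : (Fin n → ZMod 2) → ZMod 2) :
    avgSens (fun y : Fin (n+1) → ZMod 2 => y 0 * (g (Fin.tail y) + 1)) =
      (1/2) * avgSens g + (1 / 2 ^ n) * ∑ t : Fin n → ZMod 2, ((g t + 1).val : ℚ) := by
  unfold avgSens
  rw [Fin.sum_univ_succ, act0]
  rw [Finset.sum_congr rfl fun i _ => act_succ g i, ← Finset.mul_sum]
  ring

lemma Hf_O_zero : ∑ y : Fin 2 → ZMod 2, ((Hf 0 y).val : ℚ) = 1 := by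
  rw [← Nat.cast_sum]
  have : (∑ y : Fin 2 → ZMod 2, (Hf 0 y).val) = 1 := by decide
  rw [this]
  norm_num

lemma Hf_avg_zero : avgSens (Hf 0) = 1 := by
  unfold avgSens activity
  rw [Fin.sum_univ_two, ← Nat.cast_sum, ← Nat.cast_sum]
  have h0 : (∑ x : Fin 2 → ZMod 2, (Hf 0 (Function.update x 0 (x 0 + 1)) + Hf 0 x).val) = 2 := by
    decide
  have h1 : (∑ x : Fin 2 → ZMod 2, (Hf 0 (Function.update x 1 (x 1 + 1)) + Hf 0 x).val) = 2 := by
    decide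
  rw [h0, h1]
  norm_num

lemma Hf_O : ∀ m : ℕ, ∑ y : Fin (m+2) → ZMod 2, ((Hf m y).val : ℚ) = (2^(m+2) - (-1:ℚ)^m)/3 := by
  intro m
  induction m with
  | zero => rw [Hf_O_zero]; norm_num
  | succ m ih =>
    calc ∑ y : Fin (m+1+2) → ZMod 2, ((Hf (m+1) y).val : ℚ)
        = ∑ y : Fin (m+3) → ZMod 2,
            (((fun y : Fin (m+3) → ZMod 2 => y 0 * (Hf m (Fin.tail y) + 1)) y).val : ℚ) :=
          Finset.sum_congr rfl fun y _ => by rw [Hf_succ m y]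
      _ = 2^(m+2) - ∑ t : Fin (m+2) → ZMod 2, ((Hf m t).val : ℚ) := count_rec (Hf m)
      _ = (2^(m+1+2) - (-1:ℚ)^(m+1))/3 := by rw [ih]; ring

lemma Hf_avg : ∀ m : ℕ, avgSens (Hf m) = 4/3 - (3 + (-1:ℚ)^m)/(3 * 2^(m+2)) := by
  intro m
  induction m with
  | zero => rw [Hf_avg_zero]; norm_num
  | succ m ih =>
    have e : avgSens (Hf (m+1)) =
        avgSens (fun y : Fin (m+3) → ZMod 2 => y 0 * (Hf m (Fin.tail y) + 1)) := by
      unfold avgSens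
      refine Finset.sum_congr rfl fun i _ => ?_
      unfold activity
      congr 1
      refine Finset.sum_congr rfl fun x _ => ?_
      rw [Hf_succ, Hf_succ]
    rw [e, avg_rec, sum_flip, Hf_O, ih]
    have h2 : (2:ℚ)^(m+2) ≠ 0 := by positivity
    field_simp
    ring

lemma bridge : ∀ (k i : ℕ) (M y : ℕ → ZMod 2),
    (∀ t, t < k → M (i+t) = y (i+t)) → M (i+k) = y (i+k) * y (i+k+1) →
    nestVal M (k+1) i = Hn k i y := by
  intro k
  induction k with
  | zero =>
    intro i M y _ h2
    show M i = y i * y (i+1)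
    simpa using h2
  | succ k ih =>
    intro i M y h1 h2
    show M i * (nestVal M (k+1) (i+1) + 1) = y i * (Hn k (i+1) y + 1)
    have h0 := h1 0 (by omega)
    rw [Nat.add_zero] at h0
    rw [h0]
    congr 2
    apply ih
    · intro t ht
      have := h1 (t+1) (by omega)
      rw [show i + (t+1) = i+1+t by omega] at this
      exact this
    · have := h2
      rw [show i + (k+1) = i+1+k by omega] at this
      exact this

/-- For `n ≥ 3`, a nested canalizing function whose layered form has layer
number `r = n−1` with layer sizes `k₁ = ⋯ = k_{n−2} = 1`, `k_{n−1} = 2` has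
average sensitivity `sᶠ = 4/3 − (3 + (−1)ⁿ)/(3·2ⁿ)`. -/
theorem statement17 {n : ℕ} (hn : 3 ≤ n) (f : (Fin n → ZMod 2) → ZMod 2)
    (L : Fin n → Fin (n - 1)) (a : Fin n → ZMod 2) (b : ZMod 2)
    (h : IsLayeredForm f L a b)
    (hsize : ∀ l : Fin (n - 1),
      layerSize L (l : ℕ) = if (l : ℕ) = n - 2 then 2 else 1) :
    avgSens f = 4 / 3 - (3 + (-1 : ℚ) ^ n) / (3 * 2 ^ n) := by
  obtain ⟨m, rfl⟩ : ∃ m, n = m + 3 := ⟨n - 3, by omega⟩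
  obtain ⟨-, -, -, hform⟩ := h
  -- single-element layers
  have hu : ∀ i : ℕ, i < m + 1 → ∃ uu : Fin (m+3),
      Finset.univ.filter (fun j : Fin (m+3) => (L j : ℕ) = i) = {uu} := by
    intro i hi
    apply Finset.card_eq_one.mp
    have h1 := hsize ⟨i, by omega⟩
    simpa [layerSize, show (m+3-2 : ℕ) = m+1 from rfl, hi.ne] using h1
  choose u hu using hu
  -- the two-element last layer
  obtain ⟨j1, j2, hj12, hS⟩ : ∃ j1 j2 : Fin (m+3), j1 ≠ j2 ∧
      Finset.univ.filter (fun j : Fin (m+3) => (L j : ℕ) = m+1) = {j1, j2} := by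
    apply Finset.card_eq_two.mp
    have h1 := hsize ⟨m+1, by omega⟩
    simpa [layerSize, show (m+3-2 : ℕ) = m+1 from rfl] using h1
  set e0 : Fin (m+3) → Fin (m+3) := fun p =>
    if h : (p:ℕ) < m+1 then u (p:ℕ) h else if (p:ℕ) = m+1 then j1 else j2 with he0
  have hul : ∀ (i : ℕ) (h : i < m+1), (L (u i h) : ℕ) = i := by
    intro i hi
    have : u i hi ∈ Finset.univ.filter (fun j : Fin (m+3) => (L j : ℕ) = i) := by
      rw [hu i hi]; exact Finset.mem_singleton_self _
    simpa using this
  have hj1l : (L j1 : ℕ) = m+1 := by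
    have : j1 ∈ Finset.univ.filter (fun j : Fin (m+3) => (L j : ℕ) = m+1) := by
      rw [hS]; simp
    simpa using this
  have hj2l : (L j2 : ℕ) = m+1 := by
    have : j2 ∈ Finset.univ.filter (fun j : Fin (m+3) => (L j : ℕ) = m+1) := by
      rw [hS]; simp
    simpa using this
  have hL : ∀ p : Fin (m+3), (L (e0 p) : ℕ) = min (p:ℕ) (m+1) := by
    intro p
    by_cases hp : (p:ℕ) < m+1
    · rw [he0]; simp only [dif_pos hp]
      rw [hul (p:ℕ) hp]
      omega
    · rw [he0]; simp only [dif_neg hp]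
      by_cases hp2 : (p:ℕ) = m+1
      · rw [if_pos hp2, hj1l]; omega
      · rw [if_neg hp2, hj2l]; omega
  have hinj : Function.Injective e0 := by
    intro p q hpq
    have h1 : min (p:ℕ) (m+1) = min (q:ℕ) (m+1) := by
      rw [← hL p, ← hL q, hpq]
    have hp3 := p.isLt
    have hq3 := q.isLt
    by_cases hp : (p:ℕ) < m+1 <;> by_cases hq : (q:ℕ) < m+1
    · apply Fin.ext; omega
    · omega
    · omega
    · -- both in {m+1, m+2}
      rw [he0] at hpq
      simp only [dif_neg hp, dif_neg hq] at hpq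
      by_cases hp2 : (p:ℕ) = m+1 <;> by_cases hq2 : (q:ℕ) = m+1
      · apply Fin.ext; omega
      · rw [if_pos hp2, if_neg hq2] at hpq; exact absurd hpq hj12
      · rw [if_neg hp2, if_pos hq2] at hpq; exact absurd hpq.symm hj12
      · apply Fin.ext; omega
  let E : Equiv.Perm (Fin (m+3)) := Equiv.ofBijective e0 (Finite.injective_iff_bijective.mp hinj)
  have hE : ∀ p, E p = e0 p := fun p => rfl
  have hfx : f = fun x => Hf (m+1) (fun p => x (E p) + a (E p)) + b := by
    funext x
    rw [hform x]
    congr 1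
    show nestVal (fun i => layerMon L a i x) (m+2) 0 = _
    have hY : Hf (m+1) (fun p => x (E p) + a (E p)) =
        Hn (m+1) 0 (fun j => if h : j < m+3 then x (e0 ⟨j, h⟩) + a (e0 ⟨j, h⟩) else 0) := rfl
    rw [hY]
    apply bridge
    · intro t ht
      rw [Nat.zero_add]
      have htlt : t < m+3 := by omega
      rw [dif_pos htlt]
      have he : e0 ⟨t, htlt⟩ = u t ht := by
        rw [he0]; simp only []
        rw [dif_pos (show ((⟨t, htlt⟩ : Fin (m+3)) : ℕ) < m+1 from ht)]
      rw [he]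
      show layerMon L a t x = _
      unfold layerMon
      rw [hu t ht, Finset.prod_singleton]
    · rw [Nat.zero_add]
      have h1lt : m+1 < m+3 := by omega
      have h2lt : m+2 < m+3 := by omega
      rw [dif_pos h1lt, dif_pos h2lt]
      have he1 : e0 ⟨m+1, h1lt⟩ = j1 := by
        rw [he0]; simp only []
        rw [dif_neg (by simp), if_pos (by simp)]
      have he2 : e0 ⟨m+2, h2lt⟩ = j2 := by
        rw [he0]; simp only []
        rw [dif_neg (by simp), if_neg (by simp)]
      rw [he1, he2]
      show layerMon L a (m+1) x = _
      unfold layerMon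
      rw [hS, Finset.prod_pair hj12]
  rw [hfx, avgSens_add_const, avgSens_relabel (Hf (m+1)) E (fun p => a (E p)), Hf_avg]
  have hpow : ((-1:ℚ))^(m+3) = (-1)^(m+1) := by ring
  rw [hpow]
end

section
/- Let n ≥ 4 and let f : 𝔽₂ⁿ → 𝔽₂ be a nested canalizing function whose layered form has layer number r = n−2 with layer sizes k₁ = ⋯ = k_{n−3} = 1 and k_{n−2} = 3. Then the average sensitivity of f equals s^f = 4/3 − (9 + 5·(−1)^{n−1})/(3 · 2ⁿ). -/
section NCFHelpers
open Finset

lemma zval_mul (u v : ZMod 2) : (((u*v).val : ℚ)) = (u.val : ℚ) * v.val := by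
  have : (u*v).val = u.val * v.val := by fin_cases u <;> fin_cases v <;> rfl
  rw [this]; push_cast; ring

lemma zval_add_one (u : ZMod 2) : (((u+1).val : ℚ)) = 1 - (u.val : ℚ) := by
  have h : ∀ v : ZMod 2, (v+1).val + v.val = 1 := by decide
  have := h u
  have h2 : ((u+1).val : ℚ) + (u.val : ℚ) = 1 := by exact_mod_cast congrArg (Nat.cast : ℕ → ℚ) this
  linarith

lemma sum_one_cube {n : ℕ} : ∑ _x : Fin n → ZMod 2, (1:ℚ) = 2^n := by
  simp [Finset.card_univ]

lemma indep {n : ℕ} (S : Finset (Fin n)) (A B : (Fin n → ZMod 2) → ℚ)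
    (hA : ∀ x y, (∀ i ∈ S, x i = y i) → A x = A y)
    (hB : ∀ x y, (∀ i ∉ S, x i = y i) → B x = B y) :
    (2^n : ℚ) * ∑ x, A x * B x = (∑ x, A x) * (∑ x, B x) := by
  classical
  set e := (Equiv.piEquivPiSubtypeProd (fun i => i ∈ S) (fun _ => ZMod 2)).symm with he
  have hcard1 : Fintype.card ({i : Fin n // i ∈ S} → ZMod 2) = 2 ^ S.card := by
    rw [Fintype.card_fun, Fintype.card_coe]; rfl
  have hcard2 : Fintype.card ({i : Fin n // i ∉ S} → ZMod 2) = 2 ^ (n - S.card) := by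
    rw [Fintype.card_fun, Fintype.card_subtype_compl, Fintype.card_coe, Fintype.card_fin]; rfl
  have hSle : S.card ≤ n := by simpa using Finset.card_le_card (Finset.subset_univ S)
  have hAe : ∀ u v, A (e (u, v)) = A (e (u, fun _ => 0)) := by
    intro u v
    apply hA
    intro i hi
    simp [he, Equiv.piEquivPiSubtypeProd_symm_apply, hi]
  have hBe : ∀ u v, B (e (u, v)) = B (e (fun _ => 0, v)) := by
    intro u v
    apply hB
    intro i hi
    simp [he, Equiv.piEquivPiSubtypeProd_symm_apply, hi]
  have h1 : ∑ x, A x * B x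
      = (∑ u, A (e (u, fun _ => 0))) * (∑ v, B (e (fun _ => 0, v))) := by
    rw [← Equiv.sum_comp e (fun x => A x * B x), Fintype.sum_prod_type, Finset.sum_mul_sum]
    refine Finset.sum_congr rfl fun u _ => Finset.sum_congr rfl fun v _ => ?_
    rw [hAe u v, hBe u v]
  have h2 : ∑ x, A x = (2:ℚ)^(n - S.card) * ∑ u, A (e (u, fun _ => 0)) := by
    rw [← Equiv.sum_comp e A, Fintype.sum_prod_type]
    rw [Finset.sum_comm]
    rw [Finset.sum_congr rfl (fun v _ => Finset.sum_congr rfl fun u _ => hAe u v)]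
    rw [Finset.sum_const, Finset.card_univ, hcard2, nsmul_eq_mul]
    push_cast
    ring
  have h3 : ∑ x, B x = (2:ℚ)^(S.card) * ∑ v, B (e (fun _ => 0, v)) := by
    rw [← Equiv.sum_comp e B, Fintype.sum_prod_type]
    rw [Finset.sum_congr rfl (fun u _ => Finset.sum_congr rfl fun v _ => hBe u v)]
    rw [Finset.sum_const, Finset.card_univ, hcard1, nsmul_eq_mul]
    push_cast
    ring
  rw [h1, h2, h3]
  have hp : (2:ℚ)^(n - S.card) * (2:ℚ)^(S.card) = 2^n := by
    rw [← pow_add]; congr 1; omega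
  calc (2^n:ℚ) * ((∑ u, A (e (u, fun _ => 0))) * (∑ v, B (e (fun _ => 0, v))))
      = ((2:ℚ)^(n - S.card) * (2:ℚ)^(S.card)) * ((∑ u, A (e (u, fun _ => 0))) * (∑ v, B (e (fun _ => 0, v)))) := by rw [hp]
    _ = _ := by ring

lemma sum_single {n : ℕ} (j : Fin n) (c : ZMod 2) :
    ∑ x : Fin n → ZMod 2, ((x j + c).val : ℚ) = 2^n / 2 := by
  classical
  set e : (Fin n → ZMod 2) ≃ (Fin n → ZMod 2) :=
    { toFun := fun x => Function.update x j (x j + 1)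
      invFun := fun x => Function.update x j (x j + 1)
      left_inv := by
        intro x; funext i
        rcases eq_or_ne i j with rfl | hi
        · simp only [Function.update_self]
          exact (by decide : ∀ v : ZMod 2, v + 1 + 1 = v) _
        · simp [Function.update_of_ne hi]
      right_inv := by
        intro x; funext i
        rcases eq_or_ne i j with rfl | hi
        · simp only [Function.update_self]
          exact (by decide : ∀ v : ZMod 2, v + 1 + 1 = v) _
        · simp [Function.update_of_ne hi] } with he
  have key : ∑ x : Fin n → ZMod 2, ((x j + c).val : ℚ)
      = ∑ x : Fin n → ZMod 2, ((x j + 1 + c).val : ℚ) := by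
    rw [← Equiv.sum_comp e (fun x => ((x j + c).val : ℚ))]
    refine Finset.sum_congr rfl fun x _ => ?_
    simp [he]
  have tot : ∀ u : ZMod 2, ((u + c).val : ℚ) + ((u + 1 + c).val : ℚ) = 1 := by
    intro u
    have h : ∀ u c : ZMod 2, (u + c).val + (u + 1 + c).val = 1 := by decide
    exact_mod_cast congrArg (Nat.cast : ℕ → ℚ) (h u c)
  have : (2:ℚ) * ∑ x : Fin n → ZMod 2, ((x j + c).val : ℚ) = 2^n := by
    rw [two_mul]
    nth_rewrite 2 [key]
    rw [← Finset.sum_add_distrib]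
    rw [Finset.sum_congr rfl fun x _ => tot (x j)]
    exact sum_one_cube
  linarith

lemma two_pow_ne (m : ℕ) : ((2:ℚ)^m) ≠ 0 := pow_ne_zero _ two_ne_zero

lemma sum_mon {n : ℕ} (a : Fin n → ZMod 2) (T : Finset (Fin n)) :
    ∑ x : Fin n → ZMod 2, (((∏ j ∈ T, (x j + a j)).val : ℚ)) = 2^n / 2^T.card := by
  classical
  induction T using Finset.induction_on with
  | empty =>
    have h1 : ∀ x : Fin n → ZMod 2, ((∏ j ∈ (∅:Finset (Fin n)), (x j + a j)).val : ℚ) = 1 := by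
      intro x; rw [Finset.prod_empty]; norm_num [ZMod.val_one]
    rw [Finset.sum_congr rfl fun x _ => h1 x, sum_one_cube, Finset.card_empty, pow_zero, div_one]
  | @insert j T hj ih =>
    have hsplit : ∀ x : Fin n → ZMod 2,
        ((∏ j' ∈ insert j T, (x j' + a j')).val : ℚ)
          = ((x j + a j).val : ℚ) * ((∏ j' ∈ T, (x j' + a j')).val : ℚ) := by
      intro x
      rw [Finset.prod_insert hj, zval_mul]
    rw [Finset.sum_congr rfl fun x _ => hsplit x]
    have key := indep {j} (fun x => ((x j + a j).val : ℚ))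
      (fun x => ((∏ j' ∈ T, (x j' + a j')).val : ℚ))
      (by intro x y hxy; rw [hxy j (Finset.mem_singleton_self j)])
      (by
        intro x y hxy
        congr 1
        refine congrArg ZMod.val (Finset.prod_congr rfl fun j' hj' => ?_)
        rw [hxy j' (by simp only [Finset.mem_singleton]; rintro rfl; exact hj hj')])
    rw [sum_single, ih] at key
    have h2 : (2:ℚ)^n ≠ 0 := two_pow_ne n
    rw [Finset.card_insert_of_notMem hj]
    refine mul_left_cancel₀ h2 ?_
    rw [key, pow_succ]
    have h3 : (2:ℚ)^T.card ≠ 0 := two_pow_ne T.card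
    field_simp

lemma layerMon_congr {n r : ℕ} (L : Fin n → Fin r) (a : Fin n → ZMod 2) (i : ℕ)
    (x y : Fin n → ZMod 2) (hxy : ∀ j, (L j : ℕ) = i → x j = y j) :
    layerMon L a i x = layerMon L a i y := by
  unfold layerMon
  exact Finset.prod_congr rfl fun j hj => by rw [hxy j (by simpa using hj)]

lemma sum_layerMon {n r : ℕ} (L : Fin n → Fin r) (a : Fin n → ZMod 2) (i : ℕ) :
    ∑ x : Fin n → ZMod 2, ((layerMon L a i x).val : ℚ) = 2^n / 2^(layerSize L i) :=
  sum_mon a _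

lemma nestVal_succ (M : ℕ → ZMod 2) {t : ℕ} (ht : 1 ≤ t) (l : ℕ) :
    nestVal M (t+1) l = M l * (nestVal M t (l+1) + 1) := by
  obtain ⟨s, rfl⟩ := Nat.exists_eq_add_of_le' ht
  rfl

lemma nestVal_congr (M M' : ℕ → ZMod 2) :
    ∀ (t l : ℕ), (∀ i, l ≤ i → i < l + t → M i = M' i) → nestVal M t l = nestVal M' t l := by
  intro t
  induction t using Nat.strong_induction_on with
  | _ t ih =>
    intro l h
    match t with
    | 0 => rfl
    | 1 => exact h l le_rfl (by omega)
    | (s+2) =>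
      show M l * (nestVal M (s+1) (l+1) + 1) = M' l * (nestVal M' (s+1) (l+1) + 1)
      rw [h l le_rfl (by omega), ih (s+1) (by omega) (l+1) (fun i h1 h2 => h i (by omega) (by omega))]

lemma nest_diff (M M' : ℕ → ZMod 2) (p : ℕ) (hMM : ∀ i, i ≠ p → M' i = M i) :
    ∀ (t l : ℕ), l ≤ p → p < l + t →
    nestVal M' t l + nestVal M t l =
      (∏ i ∈ Finset.Ico l p, M i) * ((M' p + M p) *
        (if p + 1 < l + t then nestVal M (l + t - (p+1)) (p+1) + 1 else 1)) := by
  intro t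
  induction t using Nat.strong_induction_on with
  | _ t ih =>
    intro l hlp hpt
    match t with
    | 0 => omega
    | 1 =>
      have hp : p = l := by omega
      subst hp
      rw [if_neg (by omega), Finset.Ico_self, Finset.prod_empty]
      show M' p + M p = 1 * ((M' p + M p) * 1)
      ring
    | (s+2) =>
      show M' l * (nestVal M' (s+1) (l+1) + 1) + M l * (nestVal M (s+1) (l+1) + 1) = _
      rcases eq_or_ne p l with rfl | hpl
      · -- p = l
        have htail : nestVal M' (s+1) (p+1) = nestVal M (s+1) (p+1) :=
          nestVal_congr M' M (s+1) (p+1) (fun i h1 h2 => hMM i (by omega))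
        rw [htail, Finset.Ico_self, Finset.prod_empty, if_pos (by omega)]
        have harith : ∀ u v w : ZMod 2, u * (w + 1) + v * (w + 1) = 1 * ((u + v) * (w + 1)) := by
          decide
        have hidx : p + (s+2) - (p+1) = s+1 := by omega
        rw [hidx]
        exact harith _ _ _
      · -- p > l
        have hlp' : l + 1 ≤ p := by omega
        rw [hMM l (Ne.symm hpl)]
        have hkey := ih (s+1) (by omega) (l+1) hlp' (by omega)
        have harith : ∀ u A B : ZMod 2, u * (A + 1) + u * (B + 1) = u * (A + B) := by decide
        rw [harith (M l) _ _, hkey]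
        rw [Finset.prod_eq_prod_Ico_succ_bot (by omega : l < p) M]
        have h1 : l + 1 + (s+1) = l + (s+2) := by omega
        rw [h1]
        ring

lemma nest_x_congr {n r : ℕ} (L : Fin n → Fin r) (a : Fin n → ZMod 2) (t l : ℕ)
    (x y : Fin n → ZMod 2) (hxy : ∀ j, l ≤ (L j : ℕ) → x j = y j) :
    nestVal (fun i => layerMon L a i x) t l = nestVal (fun i => layerMon L a i y) t l := by
  refine nestVal_congr _ _ t l fun i h1 h2 => ?_
  exact layerMon_congr L a i x y fun j hj => hxy j (by omega)

lemma sum_nest {n r : ℕ} (L : Fin n → Fin r) (a : Fin n → ZMod 2) :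
    ∀ (t l : ℕ), 1 ≤ t → layerSize L (l+t-1) = 3 →
    (∀ i, l ≤ i → i < l+t-1 → layerSize L i = 1) →
    ∑ x : Fin n → ZMod 2, ((nestVal (fun i => layerMon L a i x) t l).val : ℚ)
      = 2^n * (1/3 - (5/24) * (-1/2)^(t-1)) := by
  intro t l ht
  obtain ⟨s, rfl⟩ : ∃ s, t = s + 1 := ⟨t-1, by omega⟩
  clear ht
  induction s generalizing l with
  | zero =>
    intro hlast _
    have h1 : ∀ x : Fin n → ZMod 2,
        ((nestVal (fun i => layerMon L a i x) 1 l).val : ℚ) = ((layerMon L a l x).val : ℚ) := by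
      intro x; rfl
    rw [Finset.sum_congr rfl fun x _ => h1 x, sum_layerMon]
    simp only [Nat.add_sub_cancel] at hlast
    rw [hlast]
    norm_num
    ring
  | succ s ih =>
    intro hlast hmid
    have hsplit : ∀ x : Fin n → ZMod 2,
        ((nestVal (fun i => layerMon L a i x) (s+1+1) l).val : ℚ)
          = ((layerMon L a l x).val : ℚ)
            * (1 - ((nestVal (fun i => layerMon L a i x) (s+1) (l+1)).val : ℚ)) := by
      intro x
      rw [nestVal_succ _ (by omega), zval_mul, zval_add_one]
    rw [Finset.sum_congr rfl fun x _ => hsplit x]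
    set S := Finset.univ.filter (fun j : Fin n => (L j : ℕ) = l) with hS
    have key := indep S (fun x => ((layerMon L a l x).val : ℚ))
      (fun x => (1 - ((nestVal (fun i => layerMon L a i x) (s+1) (l+1)).val : ℚ)))
      (by
        intro x y hxy
        rw [layerMon_congr L a l x y fun j hj => hxy j (by simp [hS, hj])])
      (by
        intro x y hxy
        rw [nest_x_congr L a (s+1) (l+1) x y fun j hj => hxy j (by simp [hS]; omega)])
    have hAsum : ∑ x : Fin n → ZMod 2, ((layerMon L a l x).val : ℚ) = 2^n / 2 := by
      rw [sum_layerMon, hmid l le_rfl (by omega)]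
      norm_num
    have hBsum : ∑ x : Fin n → ZMod 2,
        (1 - ((nestVal (fun i => layerMon L a i x) (s+1) (l+1)).val : ℚ))
        = 2^n - 2^n * (1/3 - (5/24) * (-1/2)^(s+1-1)) := by
      rw [Finset.sum_sub_distrib, sum_one_cube,
        ih (l+1) (by rw [show l+1+(s+1)-1 = l+(s+1+1)-1 from by omega]; exact hlast)
          (fun i h1 h2 => hmid i (by omega) (by omega))]
    rw [hAsum, hBsum] at key
    refine mul_left_cancel₀ (two_pow_ne n) ?_
    rw [key]
    have e1 : s + 1 + 1 - 1 = s + 1 := by omega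
    have e2 : s + 1 - 1 = s := by omega
    rw [e1, e2, pow_succ]
    ring

lemma sum_prefix {n r : ℕ} (L : Fin n → Fin r) (a : Fin n → ZMod 2) :
    ∀ (l : ℕ), (∀ i, i < l → layerSize L i = 1) →
    ∑ x : Fin n → ZMod 2, (((∏ i ∈ Finset.range l, layerMon L a i x).val : ℚ))
      = 2^n / 2^l := by
  intro l
  induction l with
  | zero =>
    intro _
    have h1 : ∀ x : Fin n → ZMod 2,
        ((∏ i ∈ Finset.range 0, layerMon L a i x).val : ℚ) = 1 := by
      intro x; rw [Finset.range_zero, Finset.prod_empty]; norm_num [ZMod.val_one]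
    rw [Finset.sum_congr rfl fun x _ => h1 x, sum_one_cube]
    norm_num
  | succ l ih =>
    intro hmid
    have hsplit : ∀ x : Fin n → ZMod 2,
        ((∏ i ∈ Finset.range (l+1), layerMon L a i x).val : ℚ)
          = ((∏ i ∈ Finset.range l, layerMon L a i x).val : ℚ) * ((layerMon L a l x).val : ℚ) := by
      intro x
      rw [Finset.prod_range_succ, zval_mul]
    rw [Finset.sum_congr rfl fun x _ => hsplit x]
    set S := Finset.univ.filter (fun j : Fin n => (L j : ℕ) < l) with hS
    have key := indep S (fun x => ((∏ i ∈ Finset.range l, layerMon L a i x).val : ℚ))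
      (fun x => ((layerMon L a l x).val : ℚ))
      (by
        intro x y hxy
        refine congrArg _ (congrArg ZMod.val (Finset.prod_congr rfl fun i hi => ?_))
        refine layerMon_congr L a i x y fun j hj => hxy j ?_
        simp only [hS, Finset.mem_filter, Finset.mem_univ, true_and]
        simp only [Finset.mem_range] at hi
        omega)
      (by
        intro x y hxy
        rw [layerMon_congr L a l x y fun j hj => hxy j (by simp [hS]; omega)])
    rw [ih (fun i hi => hmid i (by omega)), sum_layerMon, hmid l (by omega)] at key
    refine mul_left_cancel₀ (two_pow_ne n) ?_
    rw [key, pow_succ]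
    have := two_pow_ne l
    field_simp
    ring

lemma diff_eq {n : ℕ} (hn : 4 ≤ n) (f : (Fin n → ZMod 2) → ZMod 2)
    (L : Fin n → Fin (n - 2)) (a : Fin n → ZMod 2) (b : ZMod 2)
    (hf : ∀ x, f x = nestVal (fun i => layerMon L a i x) (n-2) 0 + b)
    (j : Fin n) (x : Fin n → ZMod 2) :
    f (Function.update x j (x j + 1)) + f x =
      (∏ i ∈ Finset.range (L j : ℕ), layerMon L a i x) *
        ((∏ j' ∈ (Finset.univ.filter
            (fun j' : Fin n => (L j' : ℕ) = (L j : ℕ))).erase j, (x j' + a j')) *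
          (if (L j : ℕ) + 1 < n - 2 then
            nestVal (fun i => layerMon L a i x) (n - 2 - ((L j : ℕ)+1)) ((L j : ℕ)+1) + 1
          else 1)) := by
  classical
  set l := (L j : ℕ) with hl
  set x' := Function.update x j (x j + 1) with hx'
  set M := fun i => layerMon L a i x with hM
  set M' := fun i => layerMon L a i x' with hM'
  have hcancel : ∀ u v w : ZMod 2, (u + w) + (v + w) = u + v := by decide
  rw [hf, hf, hcancel]
  have hMM : ∀ i, i ≠ l → M' i = M i := by
    intro i hi
    refine layerMon_congr L a i x' x fun j' hj' => ?_
    have : j' ≠ j := fun hjj => hi (by rw [← hj', hjj])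
    simp [hx', Function.update_of_ne this]
  have hlt : l < n - 2 := (L j).isLt
  have key := nest_diff M M' l hMM (n-2) 0 (Nat.zero_le l) (by omega)
  rw [zero_add] at key
  rw [key, Finset.range_eq_Ico]
  congr 1
  congr 1
  -- M' l + M l = erase product
  have hjF : j ∈ Finset.univ.filter (fun j' : Fin n => (L j' : ℕ) = l) := by
    simp [hl]
  have hMx' : M' l = (x j + a j + 1) *
      ∏ j' ∈ (Finset.univ.filter (fun j' : Fin n => (L j' : ℕ) = l)).erase j,
        (x j' + a j') := by
    rw [hM']
    show layerMon L a l x' = _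
    unfold layerMon
    rw [← Finset.mul_prod_erase _ _ hjF]
    congr 1
    · simp only [hx', Function.update_self]; ring
    · refine Finset.prod_congr rfl fun j' hj' => ?_
      have : j' ≠ j := (Finset.mem_erase.mp hj').1
      simp [hx', Function.update_of_ne this]
  have hMx : M l = (x j + a j) *
      ∏ j' ∈ (Finset.univ.filter (fun j' : Fin n => (L j' : ℕ) = l)).erase j,
        (x j' + a j') := by
    rw [hM]
    show layerMon L a l x = _
    unfold layerMon
    rw [← Finset.mul_prod_erase _ _ hjF]
  rw [hMx', hMx]
  exact (by decide : ∀ u w : ZMod 2, (u+1)*w + u*w = w) _ _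

lemma act_mid {n : ℕ} (hn : 4 ≤ n) (f : (Fin n → ZMod 2) → ZMod 2)
    (L : Fin n → Fin (n - 2)) (a : Fin n → ZMod 2) (b : ZMod 2)
    (hf : ∀ x, f x = nestVal (fun i => layerMon L a i x) (n-2) 0 + b)
    (hsize' : ∀ i : ℕ, i < n-2 → layerSize L i = if i = n-3 then 3 else 1)
    (j : Fin n) (hj : (L j : ℕ) < n - 3) :
    activity f j = (1/2^(L j : ℕ)) * (2/3 + (5/24) * (-1/2 : ℚ)^(n-4-(L j : ℕ))) := by
  classical
  set l := (L j : ℕ) with hl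
  have hlt : l < n - 2 := (L j).isLt
  set F := Finset.univ.filter (fun j' : Fin n => (L j' : ℕ) = l) with hF
  set C := fun x : Fin n → ZMod 2 =>
    nestVal (fun i => layerMon L a i x) (n - 2 - (l+1)) (l+1) + 1 with hC
  have hcond : l + 1 < n - 2 := by omega
  have hsplit : ∀ x : Fin n → ZMod 2,
      ((f (Function.update x j (x j + 1)) + f x).val : ℚ)
        = ((∏ i ∈ Finset.range l, layerMon L a i x).val : ℚ)
          * (((∏ j' ∈ F.erase j, (x j' + a j')).val : ℚ) * ((C x).val : ℚ)) := by
    intro x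
    rw [diff_eq hn f L a b hf j x]
    rw [if_pos hcond, zval_mul, zval_mul]
  unfold activity
  rw [Finset.sum_congr rfl fun x _ => hsplit x]
  -- first factorization
  set S1 := Finset.univ.filter (fun j' : Fin n => (L j' : ℕ) < l) with hS1
  have key1 := indep S1 (fun x => ((∏ i ∈ Finset.range l, layerMon L a i x).val : ℚ))
    (fun x => ((∏ j' ∈ F.erase j, (x j' + a j')).val : ℚ) * ((C x).val : ℚ))
    (by
      intro x y hxy
      refine congrArg _ (congrArg ZMod.val (Finset.prod_congr rfl fun i hi => ?_))
      refine layerMon_congr L a i x y fun j' hj' => hxy j' ?_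
      simp only [hS1, Finset.mem_filter, Finset.mem_univ, true_and]
      simp only [Finset.mem_range] at hi
      omega)
    (by
      intro x y hxy
      have h1 : ∀ j' ∈ F.erase j, x j' = y j' := by
        intro j' hj'
        refine hxy j' ?_
        have := (Finset.mem_erase.mp hj').2
        simp only [hF, Finset.mem_filter, Finset.mem_univ, true_and] at this
        simp only [hS1, Finset.mem_filter, Finset.mem_univ, true_and]
        omega
      have h2 : C x = C y := by
        rw [hC]
        dsimp only
        rw [nest_x_congr L a (n-2-(l+1)) (l+1) x y fun j' hj' => hxy j' (by
          simp only [hS1, Finset.mem_filter, Finset.mem_univ, true_and]; omega)]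
      rw [h2]
      congr 2
      exact congrArg ZMod.val (Finset.prod_congr rfl fun j' hj' => by rw [h1 j' hj']))
  -- second factorization
  have key2 := indep (F.erase j) (fun x => ((∏ j' ∈ F.erase j, (x j' + a j')).val : ℚ))
    (fun x => ((C x).val : ℚ))
    (by
      intro x y hxy
      exact congrArg _ (congrArg ZMod.val (Finset.prod_congr rfl fun j' hj' =>
        by rw [hxy j' hj'])))
    (by
      intro x y hxy
      have h2 : C x = C y := by
        rw [hC]; dsimp only
        refine congrArg (· + 1) (nest_x_congr L a (n-2-(l+1)) (l+1) x y fun j' hj' => ?_)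
        refine hxy j' ?_
        intro hmem
        have := (Finset.mem_erase.mp hmem).2
        simp only [hF, Finset.mem_filter, Finset.mem_univ, true_and] at this
        omega
      rw [h2])
  -- compute the three sums
  have hA1 : ∑ x : Fin n → ZMod 2, ((∏ i ∈ Finset.range l, layerMon L a i x).val : ℚ)
      = 2^n / 2^l := by
    refine sum_prefix L a l fun i hi => ?_
    rw [hsize' i (by omega), if_neg (by omega)]
  have hA2 : ∑ x : Fin n → ZMod 2, ((∏ j' ∈ F.erase j, (x j' + a j')).val : ℚ)
      = 2^n := by
    have hcard : (F.erase j).card = 0 := by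
      have hFcard : F.card = 1 := by
        have := hsize' l hlt
        rw [if_neg (by omega)] at this
        exact this
      have hjF : j ∈ F := by simp [hF, hl]
      rw [Finset.card_erase_of_mem hjF, hFcard]
    rw [sum_mon a (F.erase j), hcard]
    norm_num
  have hB2 : ∑ x : Fin n → ZMod 2, ((C x).val : ℚ)
      = 2^n * (2/3 + (5/24) * (-1/2)^(n-4-l)) := by
    have hnest := sum_nest L a (n-2-(l+1)) (l+1) (by omega)
      (by rw [show l+1+(n-2-(l+1))-1 = n-3 from by omega, hsize' (n-3) (by omega), if_pos rfl])
      (fun i h1 h2 => by rw [hsize' i (by omega), if_neg (by omega)])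
    have : ∀ x : Fin n → ZMod 2, ((C x).val : ℚ)
        = 1 - ((nestVal (fun i => layerMon L a i x) (n-2-(l+1)) (l+1)).val : ℚ) := by
      intro x; rw [hC]; exact zval_add_one _
    rw [Finset.sum_congr rfl fun x _ => this x, Finset.sum_sub_distrib, sum_one_cube, hnest]
    rw [show n-2-(l+1)-1 = n-4-l from by omega]
    ring
  rw [hA2, hB2] at key2
  rw [hA1] at key1
  have hB := mul_left_cancel₀ (two_pow_ne n) key2
  rw [hB] at key1
  have h2l := two_pow_ne l
  have heq : (2^n/2^l : ℚ) * (2^n * (2/3 + (5/24) * (-1/2:ℚ)^(n-4-l)))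
      = 2^n * (2^n * (1/2^l * (2/3 + (5/24)*(-1/2:ℚ)^(n-4-l)))) := by
    field_simp
  have hSig : (∑ x : Fin n → ZMod 2,
      ((∏ i ∈ Finset.range l, layerMon L a i x).val : ℚ)
        * (((∏ j' ∈ F.erase j, (x j' + a j')).val : ℚ) * ((C x).val : ℚ)))
      = 2^n * (1/2^l * (2/3 + (5/24)*(-1/2:ℚ)^(n-4-l))) :=
    mul_left_cancel₀ (two_pow_ne n) (key1.trans heq)
  rw [hSig]
  have h2n := two_pow_ne n
  field_simp

lemma act_last {n : ℕ} (hn : 4 ≤ n) (f : (Fin n → ZMod 2) → ZMod 2)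
    (L : Fin n → Fin (n - 2)) (a : Fin n → ZMod 2) (b : ZMod 2)
    (hf : ∀ x, f x = nestVal (fun i => layerMon L a i x) (n-2) 0 + b)
    (hsize' : ∀ i : ℕ, i < n-2 → layerSize L i = if i = n-3 then 3 else 1)
    (j : Fin n) (hj : (L j : ℕ) = n - 3) :
    activity f j = (1/2^(n-3)) * (1/4 : ℚ) := by
  classical
  set l := (L j : ℕ) with hl
  have hlt : l < n - 2 := (L j).isLt
  set F := Finset.univ.filter (fun j' : Fin n => (L j' : ℕ) = l) with hF
  have hsplit : ∀ x : Fin n → ZMod 2,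
      ((f (Function.update x j (x j + 1)) + f x).val : ℚ)
        = ((∏ i ∈ Finset.range l, layerMon L a i x).val : ℚ)
          * ((∏ j' ∈ F.erase j, (x j' + a j')).val : ℚ) := by
    intro x
    rw [diff_eq hn f L a b hf j x, if_neg (by omega), mul_one, zval_mul]
  unfold activity
  rw [Finset.sum_congr rfl fun x _ => hsplit x]
  set S1 := Finset.univ.filter (fun j' : Fin n => (L j' : ℕ) < l) with hS1
  have key1 := indep S1 (fun x => ((∏ i ∈ Finset.range l, layerMon L a i x).val : ℚ))
    (fun x => ((∏ j' ∈ F.erase j, (x j' + a j')).val : ℚ))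
    (by
      intro x y hxy
      refine congrArg _ (congrArg ZMod.val (Finset.prod_congr rfl fun i hi => ?_))
      refine layerMon_congr L a i x y fun j' hj' => hxy j' ?_
      simp only [hS1, Finset.mem_filter, Finset.mem_univ, true_and]
      simp only [Finset.mem_range] at hi
      omega)
    (by
      intro x y hxy
      refine congrArg _ (congrArg ZMod.val (Finset.prod_congr rfl fun j' hj' => ?_))
      refine congrArg (· + a j') (hxy j' ?_)
      intro hmem
      have h1 := (Finset.mem_erase.mp hj').2
      simp only [hF, Finset.mem_filter, Finset.mem_univ, true_and] at h1
      simp only [hS1, Finset.mem_filter, Finset.mem_univ, true_and] at hmem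
      omega)
  have hA1 : ∑ x : Fin n → ZMod 2, ((∏ i ∈ Finset.range l, layerMon L a i x).val : ℚ)
      = 2^n / 2^l := by
    refine sum_prefix L a l fun i hi => ?_
    rw [hsize' i (by omega), if_neg (by omega)]
  have hA2 : ∑ x : Fin n → ZMod 2, ((∏ j' ∈ F.erase j, (x j' + a j')).val : ℚ)
      = 2^n / 4 := by
    have hjF : j ∈ F := by simp [hF, hl]
    have hcard : (F.erase j).card = 2 := by
      have hFcard : F.card = 3 := by
        have := hsize' l hlt
        rw [if_pos hj] at this
        exact this
      rw [Finset.card_erase_of_mem hjF, hFcard]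
    rw [sum_mon a (F.erase j), hcard]
    norm_num
  rw [hA1, hA2] at key1
  have h2l := two_pow_ne l
  have heq : (2^n/2^l : ℚ) * (2^n / 4)
      = 2^n * (2^n * (1/2^l * (1/4))) := by
    field_simp
  have hSig : (∑ x : Fin n → ZMod 2,
      ((∏ i ∈ Finset.range l, layerMon L a i x).val : ℚ)
        * ((∏ j' ∈ F.erase j, (x j' + a j')).val : ℚ))
      = 2^n * (1/2^l * (1/4)) :=
    mul_left_cancel₀ (two_pow_ne n) (key1.trans heq)
  rw [hSig, hj]
  have h2n := two_pow_ne n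
  field_simp

lemma final_sum (m : ℕ) (hm : 1 ≤ m) :
    ∑ l ∈ Finset.range m, (1/2^l : ℚ) * (2/3 + (5/24)*(-1/2:ℚ)^(m-1-l))
      + 3 * ((1/2^m) * (1/4 : ℚ))
    = 4/3 - (9 + 5*(-1:ℚ)^(m+2))/(3 * 2^(m+3)) := by
  obtain ⟨s, rfl⟩ := Nat.exists_eq_add_of_le' hm
  have hterm : ∀ l ∈ Finset.range (s+1), (1/2^l : ℚ) * (2/3 + (5/24)*(-1/2:ℚ)^(s+1-1-l))
      = (2/3) * (1/2:ℚ)^l + (5/24) * ((1/2:ℚ)^s * (-1:ℚ)^(s-l)) := by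
    intro l hl
    simp only [Finset.mem_range] at hl
    have h1 : (1/2^l : ℚ) = (1/2:ℚ)^l := by rw [one_div_pow]
    have h2 : s + 1 - 1 - l = s - l := by omega
    have h3 : (-1/2 : ℚ)^(s-l) = (-1:ℚ)^(s-l) * (1/2:ℚ)^(s-l) := by
      rw [← mul_pow]; norm_num
    have h4 : (1/2:ℚ)^l * (1/2:ℚ)^(s-l) = (1/2:ℚ)^s := by
      rw [← pow_add]; congr 1; omega
    rw [h1, h2, h3]
    calc (1/2:ℚ)^l * (2/3 + 5/24 * ((-1:ℚ)^(s-l) * (1/2:ℚ)^(s-l)))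
        = (2/3) * (1/2:ℚ)^l + (5/24) * (((1/2:ℚ)^l * (1/2:ℚ)^(s-l)) * (-1:ℚ)^(s-l)) := by ring
      _ = _ := by rw [h4]
  rw [Finset.sum_congr rfl hterm, Finset.sum_add_distrib, ← Finset.mul_sum, ← Finset.mul_sum]
  have hgeo1 : ∑ l ∈ Finset.range (s+1), (1/2:ℚ)^l = ((1/2:ℚ)^(s+1) - 1)/((1/2:ℚ) - 1) :=
    geom_sum_eq (by norm_num) (s+1)
  have hgeo2 : ∑ l ∈ Finset.range (s+1), ((1/2:ℚ)^s * (-1:ℚ)^(s-l))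
      = (1/2:ℚ)^s * (((-1:ℚ)^(s+1) - 1)/((-1:ℚ) - 1)) := by
    rw [← Finset.mul_sum]
    congr 1
    have := Finset.sum_range_reflect (fun k => ((-1:ℚ))^k) (s+1)
    simp only [show ∀ l, s + 1 - 1 - l = s - l from fun l => by omega] at this
    rw [this]
    exact geom_sum_eq (by norm_num) (s+1)
  rw [hgeo1, hgeo2]
  have h2s : ((2:ℚ))^s ≠ 0 := pow_ne_zero _ two_ne_zero
  have e1 : (1/2:ℚ)^(s+1) = (1/2:ℚ)^s * (1/2) := pow_succ _ _
  have e2 : (-1:ℚ)^(s+1) = (-1:ℚ)^s * (-1) := pow_succ _ _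
  have e3 : (-1:ℚ)^(s+1+2) = (-1:ℚ)^s * (-1) := by
    rw [pow_add, pow_add]; ring
  have e4 : (2:ℚ)^(s+1+3) = (2:ℚ)^s * 16 := by rw [pow_add]; ring
  have e5 : (1/2:ℚ)^s = 1/(2:ℚ)^s := one_div_pow 2 s
  have e6 : (1/2:ℚ)^(s+1) = 1/(2:ℚ)^(s+1) := one_div_pow 2 (s+1)
  have e7 : (2:ℚ)^(s+1) = (2:ℚ)^s * 2 := pow_succ _ _
  rw [e2, e3, e4, e6, e7, e5]
  field_simp
  ring

end NCFHelpers


/-- For `n ≥ 4`, a nested canalizing function whose layered form has layer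
number `r = n−2` with layer sizes `k₁ = ⋯ = k_{n−3} = 1`, `k_{n−2} = 3` has
average sensitivity `sᶠ = 4/3 − (9 + 5·(−1)^{n−1})/(3·2ⁿ)`. -/

theorem statement18 {n : ℕ} (hn : 4 ≤ n) (f : (Fin n → ZMod 2) → ZMod 2)
    (L : Fin n → Fin (n - 2)) (a : Fin n → ZMod 2) (b : ZMod 2)
    (h : IsLayeredForm f L a b)
    (hsize : ∀ l : Fin (n - 2),
      layerSize L (l : ℕ) = if (l : ℕ) = n - 3 then 3 else 1) :
    avgSens f = 4 / 3 - (9 + 5 * (-1 : ℚ) ^ (n - 1)) / (3 * 2 ^ n) := by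
  classical
  obtain ⟨hr1, hpos, hlast2, hf⟩ := h
  have hsize' : ∀ i : ℕ, i < n-2 → layerSize L i = if i = n-3 then 3 else 1 :=
    fun i hi => hsize ⟨i, hi⟩
  unfold avgSens
  rw [← Finset.sum_fiberwise Finset.univ L (activity f)]
  have hfval : ∀ l : Fin (n-2),
      ∑ j ∈ Finset.univ.filter (fun j => L j = l), activity f j
      = if (l:ℕ) = n-3 then 3 * ((1/2^(n-3)) * (1/4:ℚ))
        else (1/2^(l:ℕ)) * (2/3 + (5/24)*(-1/2:ℚ)^(n-4-(l:ℕ))) := by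
    intro l
    have hfilter : Finset.univ.filter (fun j : Fin n => L j = l)
        = Finset.univ.filter (fun j : Fin n => (L j : ℕ) = (l:ℕ)) := by
      refine Finset.filter_congr fun j _ => ?_
      simp [Fin.ext_iff]
    by_cases hl : (l:ℕ) = n-3
    · rw [if_pos hl, hfilter]
      have hval : ∀ j ∈ Finset.univ.filter (fun j : Fin n => (L j : ℕ) = (l:ℕ)),
          activity f j = (1/2^(n-3)) * (1/4:ℚ) := by
        intro j hj
        have hjl : (L j:ℕ) = (l:ℕ) := by simpa using hj
        exact act_last hn f L a b hf hsize' j (by omega)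
      rw [Finset.sum_congr rfl hval, Finset.sum_const]
      have hcard : (Finset.univ.filter (fun j : Fin n => (L j:ℕ) = (l:ℕ))).card = 3 := by
        have := hsize' (l:ℕ) l.isLt
        rw [if_pos hl] at this
        exact this
      rw [hcard, nsmul_eq_mul]
      norm_num
    · rw [if_neg hl, hfilter]
      have hlt : (l:ℕ) < n - 3 := by have := l.isLt; omega
      have hval : ∀ j ∈ Finset.univ.filter (fun j : Fin n => (L j : ℕ) = (l:ℕ)),
          activity f j = (1/2^(l:ℕ)) * (2/3 + (5/24)*(-1/2:ℚ)^(n-4-(l:ℕ))) := by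
        intro j hj
        have hjl : (L j:ℕ) = (l:ℕ) := by simpa using hj
        rw [act_mid hn f L a b hf hsize' j (by omega), hjl]
      rw [Finset.sum_congr rfl hval, Finset.sum_const]
      have hcard : (Finset.univ.filter (fun j : Fin n => (L j:ℕ) = (l:ℕ))).card = 1 := by
        have := hsize' (l:ℕ) l.isLt
        rw [if_neg hl] at this
        exact this
      rw [hcard, one_nsmul]
  rw [Finset.sum_congr rfl fun l _ => hfval l]
  rw [Fin.sum_univ_eq_sum_range (fun i => if i = n-3 then 3 * ((1/2^(n-3)) * (1/4:ℚ))
        else (1/2^i) * (2/3 + (5/24)*(-1/2:ℚ)^(n-4-i))) (n-2)]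
  rw [show n-2 = (n-3)+1 from by omega, Finset.sum_range_succ, if_pos rfl]
  rw [Finset.sum_congr rfl fun l hl => if_neg (by
    simp only [Finset.mem_range] at hl; omega)]
  have hfs := final_sum (n-3) (by omega)
  rw [show n-3-1 = n-4 from by omega, show n-3+2 = n-1 from by omega,
    show n-3+3 = n from by omega] at hfs
  exact hfs
end
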